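/- If a nested sequent Σ{[Γ]_v, [Δ]_u}_w is GD-invalid (falsified somewhere in a GD-model under the formula interpretation), then at least one of the two premises Σ{[Γ,[Δ]_u]_v}_w and Σ{[Δ,[Γ]_v]_u}_w of the linearity rule (lin) is GD-invalid. Equivalently, the (lin) rule is sound for GD: if both premises are GD-valid then the conclusion is GD-valid. -/
import Mathlib


inductive PForm (α : Type) : Type
  | var : α → PForm α
  | bot : PForm α
  | disj : PForm α → PForm α → PForm α
  | conj : PForm α → PForm α → PForm α
  | impl : PForm α → PForm α → PForm α

structure KModel (α : Type) where
  W : Type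
  le : W → W → Prop
  refl : ∀ w, le w w
  trans : ∀ w u v, le w u → le u v → le w v
  val : α → W → Prop
  mono : ∀ p w v, le w v → val p w → val p v

def KModel.force {α : Type} (M : KModel α) : M.W → PForm α → Prop
  | w, .var p => M.val p w
  | _, .bot => False
  | w, .disj φ ψ => M.force w φ ∨ M.force w ψ
  | w, .conj φ ψ => M.force w φ ∧ M.force w ψ
  | w, .impl φ ψ => ∀ u, M.le w u → M.force u φ → M.force u ψ

def KModel.Connected {α : Type} (M : KModel α) : Prop :=
  ∀ w u v, M.le w u → M.le w v → M.le u v ∨ M.le v u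

/-- Nested sequents: trees whose nodes are lists of polarized formulas
(`true` = input •, `false` = output ∘). -/
inductive NSeq (α : Type) : Type
  | node : List (PForm α × Bool) → List (NSeq α) → NSeq α

def bigConj {α : Type} : List (PForm α) → PForm α
  | [] => PForm.bot.impl PForm.bot
  | φ :: l => φ.conj (bigConj l)

def bigDisj {α : Type} : List (PForm α) → PForm α
  | [] => PForm.bot
  | φ :: l => φ.disj (bigDisj l)

/-- Formula interpretation of a nested sequent:
`⋀ inputs ⊃ (⋁ outputs ∨ interpretation of the nestings)`. -/
def NSeq.interp {α : Type} : NSeq α → PForm α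
  | .node Γ kids =>
      (bigConj ((Γ.filter (fun x => x.2)).map Prod.fst)).impl
        (bigDisj (((Γ.filter (fun x => !x.2)).map Prod.fst) ++
          kids.attach.map (fun s => NSeq.interp s.1)))
decreasing_by
  have := List.sizeOf_lt_of_mem s.2
  simp at *
  omega

/-- A nested-sequent context `Σ{·}_w`: a nested sequent with a distinguished
node at which additional nestings may be inserted. -/
inductive NCtx (α : Type) : Type
  | hole : List (PForm α × Bool) → List (NSeq α) → NCtx α
  | node : List (PForm α × Bool) → List (NSeq α) → NCtx α → NCtx α

/-- Insert the extra nestings `extra` at the distinguished node of the context. -/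
def NCtx.fill {α : Type} : NCtx α → List (NSeq α) → NSeq α
  | .hole Γ kids, extra => .node Γ (kids ++ extra)
  | .node Γ kids C, extra => .node Γ (kids ++ [C.fill extra])

/-- Add a nesting `[s]` inside a nested sequent (at its root component). -/
def NSeq.addChild {α : Type} : NSeq α → NSeq α → NSeq α
  | .node Γ kids, s => .node Γ (kids ++ [s])

/-- A nested sequent is GD-valid iff its formula interpretation is forced at
every world of every GD-model. -/
def GDValid {α : Type} (S : NSeq α) : Prop :=
  ∀ M : KModel α, M.Connected → ∀ w : M.W, M.force w S.interp

lemma KModel.force_mono {α : Type} (M : KModel α) (φ : PForm α) :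
    ∀ {w v : M.W}, M.le w v → M.force w φ → M.force v φ := by
  induction φ with
  | var p => intro w v h hf; exact M.mono p w v h hf
  | bot => intro w v _ hf; exact hf
  | disj φ ψ ih1 ih2 => intro w v h hf; exact hf.imp (ih1 h) (ih2 h)
  | conj φ ψ ih1 ih2 => intro w v h hf; exact ⟨ih1 h hf.1, ih2 h hf.2⟩
  | impl φ ψ _ _ =>
      intro w v h hf u hu hφ
      exact hf u (M.trans w v u h hu) hφ

lemma NSeq.interp_node {α : Type} (Γ : List (PForm α × Bool)) (kids : List (NSeq α)) :
    (NSeq.node Γ kids).interp =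
      (bigConj ((Γ.filter (fun x => x.2)).map Prod.fst)).impl
        (bigDisj (((Γ.filter (fun x => !x.2)).map Prod.fst) ++
          kids.map NSeq.interp)) := by
  rw [NSeq.interp, List.attach_map_val]

lemma KModel.force_bigDisj_append {α : Type} (M : KModel α) (w : M.W)
    (l1 l2 : List (PForm α)) :
    M.force w (bigDisj (l1 ++ l2)) ↔ M.force w (bigDisj l1) ∨ M.force w (bigDisj l2) := by
  induction l1 with
  | nil => simp [bigDisj, KModel.force]
  | cons φ l ih => simp [bigDisj, KModel.force, ih, or_assoc]

/-- Pointwise core of the linearity rule. -/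
lemma lin_core {α : Type} (M : KModel α) (hc : M.Connected) (Γ Δ : NSeq α)
    (v : M.W) (h1 : M.force v (Γ.addChild Δ).interp)
    (h2 : M.force v (Δ.addChild Γ).interp) :
    M.force v Γ.interp ∨ M.force v Δ.interp := by
  obtain ⟨G, gk⟩ := Γ
  obtain ⟨D, dk⟩ := Δ
  simp only [NSeq.addChild, NSeq.interp_node, List.map_append, List.map_cons,
    List.map_nil] at h1 h2 ⊢
  by_contra h
  push_neg at h
  obtain ⟨hΓ, hΔ⟩ := h
  simp only [KModel.force] at hΓ hΔ
  push_neg at hΓ hΔ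
  obtain ⟨u₁, hu₁, hA₁, hO₁⟩ := hΓ
  obtain ⟨u₂, hu₂, hA₂, hO₂⟩ := hΔ
  have hd1 := h1 u₁ hu₁ hA₁
  rw [← List.append_assoc, M.force_bigDisj_append] at hd1
  have hΔ₁ : M.force u₁ (NSeq.node D dk).interp := by
    rcases hd1 with hd1 | hd1
    · exact absurd hd1 hO₁
    · simp only [bigDisj, KModel.force, NSeq.interp_node] at hd1 ⊢
      rcases hd1 with hd1 | hd1
      · exact hd1
      · exact absurd hd1 (by simp [KModel.force])
  have hd2 := h2 u₂ hu₂ hA₂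
  rw [← List.append_assoc, M.force_bigDisj_append] at hd2
  have hΓ₂ : M.force u₂ (NSeq.node G gk).interp := by
    rcases hd2 with hd2 | hd2
    · exact absurd hd2 hO₂
    · simp only [bigDisj, KModel.force, NSeq.interp_node] at hd2 ⊢
      rcases hd2 with hd2 | hd2
      · exact hd2
      · exact absurd hd2 (by simp [KModel.force])
  rcases hc v u₁ u₂ hu₁ hu₂ with hle | hle
  · rw [NSeq.interp_node] at hΔ₁
    exact hO₂ (hΔ₁ u₂ hle hA₂)
  · rw [NSeq.interp_node] at hΓ₂
    exact hO₁ (hΓ₂ u₁ hle hA₁)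

/-- Context lemma: filling a context preserves pointwise implications on the
extra nestings. -/
lemma fill_ctx {α : Type} (M : KModel α) (C : NCtx α) (e1 e2 e3 : List (NSeq α))
    (H : ∀ v : M.W, M.force v (bigDisj (e1.map NSeq.interp)) →
      M.force v (bigDisj (e2.map NSeq.interp)) →
      M.force v (bigDisj (e3.map NSeq.interp))) :
    ∀ w : M.W, M.force w (C.fill e1).interp → M.force w (C.fill e2).interp →
      M.force w (C.fill e3).interp := by
  induction C with
  | hole Γ kids =>
      intro w f1 f2
      simp only [NCtx.fill, NSeq.interp_node, List.map_append] at f1 f2 ⊢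
      simp only [KModel.force] at f1 f2 ⊢
      intro u hu hA
      have d1 := f1 u hu hA
      have d2 := f2 u hu hA
      rw [M.force_bigDisj_append] at d1 d2 ⊢
      rw [M.force_bigDisj_append] at d1 d2 ⊢
      rcases d1 with d1 | d1 | d1
      · exact Or.inl d1
      · exact Or.inr (Or.inl d1)
      rcases d2 with d2 | d2 | d2
      · exact Or.inl d2
      · exact Or.inr (Or.inl d2)
      exact Or.inr (Or.inr (H u d1 d2))
  | node Γ kids C ih =>
      intro w f1 f2
      simp only [NCtx.fill, NSeq.interp_node, List.map_append, List.map_cons,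
        List.map_nil] at f1 f2 ⊢
      simp only [KModel.force] at f1 f2 ⊢
      intro u hu hA
      have d1 := f1 u hu hA
      have d2 := f2 u hu hA
      rw [← List.append_assoc, M.force_bigDisj_append] at d1 d2 ⊢
      rcases d1 with d1 | d1
      · exact Or.inl d1
      rcases d2 with d2 | d2
      · exact Or.inl d2
      refine Or.inr ?_
      simp only [bigDisj, KModel.force] at d1 d2 ⊢
      rcases d1 with d1 | d1
      swap
      · exact absurd d1 (by simp [KModel.force])
      rcases d2 with d2 | d2
      swap
      · exact absurd d2 (by simp [KModel.force])
      exact Or.inl (ih u d1 d2)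

/-- Soundness of the linearity rule `(lin)`: if both premises
`Σ{[Γ,[Δ]_u]_v}_w` and `Σ{[Δ,[Γ]_v]_u}_w` are GD-valid, then the conclusion
`Σ{[Γ]_v,[Δ]_u}_w` is GD-valid. -/
theorem lin_sound {α : Type} (C : NCtx α) (Γ Δ : NSeq α)
    (h1 : GDValid (C.fill [Γ.addChild Δ]))
    (h2 : GDValid (C.fill [Δ.addChild Γ])) :
    GDValid (C.fill [Γ, Δ]) := by
  intro M hc w
  refine fill_ctx M C [Γ.addChild Δ] [Δ.addChild Γ] [Γ, Δ] ?_ w (h1 M hc w) (h2 M hc w)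
  intro v d1 d2
  simp only [List.map_cons, List.map_nil, bigDisj, KModel.force] at d1 d2 ⊢
  have p1 : M.force v (Γ.addChild Δ).interp := by
    rcases d1 with d1 | d1
    · exact d1
    · exact absurd d1 (by simp [KModel.force])
  have p2 : M.force v (Δ.addChild Γ).interp := by
    rcases d2 with d2 | d2
    · exact d2
    · exact absurd d2 (by simp [KModel.force])
  rcases lin_core M hc Γ Δ v p1 p2 with h | h
  · exact Or.inl h
  · exact Or.inr (Or.inl h)
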